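/- Let g : ℝ → [0,1] be measurable and integrable. Then ((1/2) ∫_{-∞}^{∞} g(t) dt)^{p+1} ≤ ((p+1)/2) ∫_{-∞}^{∞} |t|^p g(t) dt for every p > 0. Equivalently, (∫ g)^{p+1} ≤ 2^p (p+1) ∫ |t|^p g(t) dt. -/

import Mathlib

open MeasureTheory Set
open scoped ENNReal

-- auxiliary: interval integral of |t|^p
lemma abs_rpow_integral {a p : ℝ} (ha : 0 ≤ a) (hp : 0 < p) :
    ∫ t in (-a)..a, |t| ^ p = 2 * (a ^ (p + 1) / (p + 1)) := by
  have hcont : Continuous fun t : ℝ => |t| ^ p :=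
    continuous_abs.rpow_const (fun t => Or.inr hp.le)
  have hint : ∀ b c : ℝ, IntervalIntegrable (fun t : ℝ => |t| ^ p) volume b c :=
    fun b c => hcont.intervalIntegrable b c
  have hneg : ∫ t in (-a)..(0:ℝ), |t| ^ p = ∫ t in (0:ℝ)..a, |t| ^ p := by
    have := intervalIntegral.integral_comp_neg (a := 0) (b := a) (fun t : ℝ => |t| ^ p)
    simpa [abs_neg] using this.symm
  have hpos : ∫ t in (0:ℝ)..a, |t| ^ p = a ^ (p + 1) / (p + 1) := by
    have hcongr : ∫ t in (0:ℝ)..a, |t| ^ p = ∫ t in (0:ℝ)..a, t ^ p := by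
      apply intervalIntegral.integral_congr
      intro t ht
      rw [Set.uIcc_of_le ha] at ht
      simp only [abs_of_nonneg ht.1]
    rw [hcongr, integral_rpow (Or.inl (by linarith))]
    rw [Real.zero_rpow (by linarith), sub_zero]
  rw [← intervalIntegral.integral_add_adjacent_intervals (hint (-a) 0) (hint 0 a),
    hneg, hpos]
  ring

theorem moment_vs_integral
    (g : ℝ → ℝ) (hg : Measurable g) (hg0 : ∀ t, 0 ≤ g t) (hg1 : ∀ t, g t ≤ 1)
    (hgint : Integrable g)
    (p : ℝ) (hp : 0 < p) :
    (ENNReal.ofReal (1 / 2) * ∫⁻ t : ℝ, ENNReal.ofReal (g t)) ^ (p + 1) ≤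
      ENNReal.ofReal ((p + 1) / 2) * ∫⁻ t : ℝ, ENNReal.ofReal (|t| ^ p * g t) := by
  have hIg : ∫⁻ t : ℝ, ENNReal.ofReal (g t) = ENNReal.ofReal (∫ t, g t) :=
    (ofReal_integral_eq_lintegral_ofReal hgint (ae_of_all _ hg0)).symm
  have habs_cont : Continuous fun t : ℝ => |t| ^ p :=
    continuous_abs.rpow_const (fun t => Or.inr hp.le)
  have hfnn : ∀ t : ℝ, 0 ≤ |t| ^ p * g t :=
    fun t => mul_nonneg (Real.rpow_nonneg (abs_nonneg t) p) (hg0 t)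
  rcases eq_or_ne (∫⁻ t : ℝ, ENNReal.ofReal (|t| ^ p * g t)) ⊤ with htop | htop
  · rw [htop, ENNReal.mul_top (ENNReal.ofReal_pos.2 (by positivity)).ne']
    exact le_top
  -- finite case: the weighted moment is integrable
  have hfint : Integrable (fun t : ℝ => |t| ^ p * g t) := by
    refine ⟨((habs_cont.measurable.mul hg)).aestronglyMeasurable, ?_⟩
    rw [hasFiniteIntegral_iff_ofReal (ae_of_all _ hfnn)]
    exact htop.lt_top
  rw [hIg, ← ofReal_integral_eq_lintegral_ofReal hfint (ae_of_all _ hfnn),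
    ← ENNReal.ofReal_mul (by positivity), ← ENNReal.ofReal_mul (by positivity),
    ENNReal.ofReal_rpow_of_nonneg (mul_nonneg (by norm_num) (integral_nonneg hg0)) (by linarith : (0:ℝ) ≤ p + 1)]
  apply ENNReal.ofReal_le_ofReal
  set I := ∫ t, g t with hI
  have hI0 : 0 ≤ I := integral_nonneg hg0
  rcases eq_or_lt_of_le hI0 with hIz | hIpos
  · rw [← hIz, mul_zero, Real.zero_rpow (by linarith)]
    have : 0 ≤ ∫ t, |t| ^ p * g t := integral_nonneg hfnn
    positivity
  set a := I / 2 with haI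
  have ha : 0 < a := by positivity
  -- key pointwise bound
  have key : ∀ t : ℝ,
      a ^ p * g t + (Icc (-a) a).indicator (fun t => |t| ^ p - a ^ p) t
        ≤ |t| ^ p * g t := by
    intro t
    by_cases ht : t ∈ Icc (-a) a
    · rw [Set.indicator_of_mem ht]
      have habs : |t| ≤ a := abs_le.2 ⟨ht.1, ht.2⟩
      have h1 : |t| ^ p ≤ a ^ p := Real.rpow_le_rpow (abs_nonneg t) habs hp.le
      nlinarith [hg0 t, hg1 t]
    · rw [Set.indicator_of_notMem ht]
      have habs : a ≤ |t| := by
        by_contra h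
        push_neg at h
        exact ht ⟨(abs_le.1 h.le).1, (abs_le.1 h.le).2⟩
      have h1 : a ^ p ≤ |t| ^ p := Real.rpow_le_rpow ha.le habs hp.le
      nlinarith [hg0 t]
  -- integrability of the two pieces
  have hind : Integrable ((Icc (-a) a).indicator (fun t : ℝ => |t| ^ p - a ^ p)) := by
    refine (IntegrableOn.integrable_indicator ?_ measurableSet_Icc)
    exact (habs_cont.sub continuous_const).integrableOn_Icc
  have h1 : Integrable (fun t : ℝ => a ^ p * g t) := hgint.const_mul _
  have hmono : (∫ t, (a ^ p * g t + (Icc (-a) a).indicator (fun t => |t| ^ p - a ^ p) t))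
      ≤ ∫ t, |t| ^ p * g t := integral_mono (h1.add hind) hfint key
  rw [integral_add h1 hind, integral_const_mul, integral_indicator measurableSet_Icc] at hmono
  have hind_val : ∫ t in Icc (-a) a, (|t| ^ p - a ^ p)
      = 2 * (a ^ (p + 1) / (p + 1)) - 2 * a * a ^ p := by
    rw [integral_Icc_eq_integral_Ioc, ← intervalIntegral.integral_of_le (by linarith), intervalIntegral.integral_sub
      (habs_cont.intervalIntegrable _ _) (intervalIntegrable_const),
      abs_rpow_integral ha.le hp, intervalIntegral.integral_const]
    rw [smul_eq_mul]
    ring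
  rw [hind_val] at hmono
  have harpow : a ^ (p + 1) = a ^ p * a := Real.rpow_add_one ha.ne' p
  have hIa : (1 : ℝ) / 2 * I = a := by rw [haI]; ring
  rw [hIa]
  have hlb : 2 * (a ^ (p + 1) / (p + 1)) ≤ ∫ t, |t| ^ p * g t := by
    have : a ^ p * I = 2 * a * a ^ p := by rw [haI]; ring_nf
    nlinarith [hmono]
  calc a ^ (p + 1) = (p + 1) / 2 * (2 * (a ^ (p + 1) / (p + 1))) := by
        field_simp
    _ ≤ (p + 1) / 2 * ∫ t, |t| ^ p * g t := by
        apply mul_le_mul_of_nonneg_left hlb (by linarith)
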